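/- Let b, η be real numbers and τ > 0 with b²η² < 2τ. Set V(x) = (1 − τx²)² + b²η²x² and x⁺ = √(2τ − b²η²)/τ. Then ∫₀^{x⁺} x²(1 − τx²)/√(1 − V(x)) dx = √(2τ − b²η²)(2b²η² − τ)/(3τ³) and ∫₀^{x⁺} b²η x²/√(1 − V(x)) dx = b²η√(2τ − b²η²)/τ². -/

import Mathlib

open Set MeasureTheory intervalIntegral

/-- FTC for an integrand with an inverse-sqrt singularity at the right endpoint. -/
lemma aux_ftc (c τ xp : ℝ) (hτ : 0 < τ) (hc : 0 < c) (hxp : τ * xp = Real.sqrt c)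
    (g F : ℝ → ℝ) (hFc : Continuous F)
    (hd : ∀ x ∈ Set.Ioo 0 xp, HasDerivAt F (g x) x)
    (q : ℝ → ℝ) (hq : ContinuousOn q (Set.uIcc 0 xp))
    (hgq : ∀ x ∈ Set.Ioc 0 xp, g x = (xp - x) ^ (-(1/2) : ℝ) * q x) :
    ∫ x in (0:ℝ)..xp, g x = F xp - F 0 := by
  have hsc : 0 < Real.sqrt c := Real.sqrt_pos.2 hc
  have hxpos : 0 < xp := by nlinarith
  have h0 : IntervalIntegrable (fun x : ℝ => x ^ (-(1/2) : ℝ)) volume 0 xp :=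
    intervalIntegrable_rpow' (by norm_num)
  have base : IntervalIntegrable (fun x : ℝ => (xp - x) ^ (-(1/2) : ℝ)) volume 0 xp := by
    simpa using (h0.comp_sub_left xp).symm
  have hint0 : IntervalIntegrable (fun x => (xp - x) ^ (-(1/2) : ℝ) * q x) volume 0 xp :=
    base.mul_continuousOn hq
  have hgint : IntervalIntegrable g volume 0 xp := by
    rw [intervalIntegrable_iff_integrableOn_Ioc_of_le hxpos.le] at hint0 ⊢
    exact hint0.congr_fun (fun x hx => (hgq x hx).symm) measurableSet_Ioc
  exact integral_eq_sub_of_hasDeriv_right_of_le hxpos.le hFc.continuousOn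
    (fun x hx => (hd x hx).hasDerivWithinAt) hgint

set_option maxHeartbeats 800000 in
/-- Closed form of the period-map components `Θ²₊` and `Θ³₊` for Family 2 (`a = 0`). -/
theorem stmt_10 (b η τ : ℝ) (hτ : 0 < τ) (h : b^2*η^2 < 2*τ)
    (V : ℝ → ℝ) (hV : ∀ x, V x = (1 - τ*x^2)^2 + b^2*η^2*x^2)
    (xp : ℝ) (hxp : xp = Real.sqrt (2*τ - b^2*η^2) / τ) :
    (∫ x in (0:ℝ)..xp, x^2*(1 - τ*x^2) / Real.sqrt (1 - V x))
        = Real.sqrt (2*τ - b^2*η^2) * (2*b^2*η^2 - τ) / (3*τ^3) ∧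
    (∫ x in (0:ℝ)..xp, b^2*η*x^2 / Real.sqrt (1 - V x))
        = b^2*η*Real.sqrt (2*τ - b^2*η^2) / τ^2 := by
  have hc : 0 < 2*τ - b^2*η^2 := by linarith
  have hsc : 0 < Real.sqrt (2*τ - b^2*η^2) := Real.sqrt_pos.2 hc
  have hτxp : τ * xp = Real.sqrt (2*τ - b^2*η^2) := by
    rw [hxp]; field_simp
  have hxpos : 0 < xp := by nlinarith
  have hxp2 : τ^2 * xp^2 = 2*τ - b^2*η^2 := by
    have := Real.sq_sqrt hc.le
    nlinarith [hτxp]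
  -- the square root of 1 - V x on (0, xp)
  have h1V : ∀ x : ℝ, 1 - V x = x^2 * (2*τ - b^2*η^2 - τ^2*x^2) := by
    intro x; rw [hV]; ring
  have hu : ∀ x ∈ Set.Ioo 0 xp, 0 < 2*τ - b^2*η^2 - τ^2*x^2 := by
    intro x hx
    have hx2 : x^2 < xp^2 := by nlinarith [hx.1, hx.2]
    nlinarith [mul_lt_mul_of_pos_left hx2 (by positivity : (0:ℝ) < τ^2)]
  have hsA : ∀ x ∈ Set.Ioo 0 xp,
      Real.sqrt (1 - V x) = x * Real.sqrt (2*τ - b^2*η^2 - τ^2*x^2) := by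
    intro x hx
    rw [h1V x, Real.sqrt_mul (sq_nonneg x), Real.sqrt_sq hx.1.le]
  have hsB : ∀ x ∈ Set.Ioo 0 xp,
      Real.sqrt (2*τ - b^2*η^2 - τ^2*x^2)
        = τ * (Real.sqrt (xp - x) * Real.sqrt (xp + x)) := by
    intro x hx
    have : 2*τ - b^2*η^2 - τ^2*x^2 = τ^2 * ((xp - x) * (xp + x)) := by
      linear_combination (-1 : ℝ) * hxp2
    rw [this, Real.sqrt_mul (sq_nonneg τ), Real.sqrt_sq hτ.le,
      Real.sqrt_mul (by linarith [hx.2] : (0:ℝ) ≤ xp - x)]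
  have hVxp : 1 - V xp = 0 := by rw [h1V]; linear_combination (-(xp^2)) * hxp2
  have hrpow : ∀ x ∈ Set.Ioo 0 xp,
      ((xp - x) ^ (-(1/2) : ℝ)) = (Real.sqrt (xp - x))⁻¹ := by
    intro x hx
    rw [Real.rpow_neg (by linarith [hx.2]), Real.sqrt_eq_rpow]
  have hqden : ∀ x ∈ Set.uIcc (0:ℝ) xp, τ * Real.sqrt (xp + x) ≠ 0 := by
    intro x hx
    rw [Set.uIcc_of_le hxpos.le] at hx
    have : 0 < xp + x := by linarith [hx.1]
    positivity
  have hqcont : ContinuousOn (fun x : ℝ => τ * Real.sqrt (xp + x)) (Set.uIcc 0 xp) :=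
    (continuous_const.mul (Real.continuous_sqrt.comp (continuous_const.add continuous_id))).continuousOn
  constructor
  · -- first integral
    have := aux_ftc (2*τ - b^2*η^2) τ xp hτ hc hτxp
      (fun x => x^2*(1 - τ*x^2) / Real.sqrt (1 - V x))
      (fun x => (2*τ - b^2*η^2 - τ)/τ^3 * Real.sqrt (2*τ - b^2*η^2 - τ^2*x^2)
        - (2*τ - b^2*η^2 - τ^2*x^2) * Real.sqrt (2*τ - b^2*η^2 - τ^2*x^2) / (3*τ^3))
      (by fun_prop)
      ?hd1
      (fun x => x*(1 - τ*x^2) / (τ * Real.sqrt (xp + x)))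
      ?hq1
      ?hgq1
    · rw [this]
      have hz : 2*τ - b^2*η^2 - τ^2*xp^2 = 0 := by linear_combination (-1 : ℝ) * hxp2
      simp only [hz, Real.sqrt_zero, mul_zero, zero_mul, zero_div, sub_zero, zero_sub]
      field_simp
      ring
    case hd1 =>
      intro x hx
      have hux := hu x hx
      have hs2 : Real.sqrt (2*τ - b^2*η^2 - τ^2*x^2) ^ 2 = 2*τ - b^2*η^2 - τ^2*x^2 :=
        Real.sq_sqrt hux.le
      have hsp : 0 < Real.sqrt (2*τ - b^2*η^2 - τ^2*x^2) := Real.sqrt_pos.2 hux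
      have hdu : HasDerivAt (fun y : ℝ => 2*τ - b^2*η^2 - τ^2*y^2) (-(τ^2*(2*x))) x := by
        simpa using ((hasDerivAt_pow 2 x).const_mul (τ^2)).const_sub (2*τ - b^2*η^2)
      have hdsq := hdu.sqrt (ne_of_gt hux)
      have hD := ((hdsq.const_mul ((2*τ - b^2*η^2 - τ)/τ^3)).sub
        ((hdu.mul hdsq).div_const (3*τ^3)))
      refine hD.congr_deriv ?_
      symm
      simp only [hsA x hx]
      set s := Real.sqrt (2*τ - b^2*η^2 - τ^2*x^2) with hs_def
      have hs0 : s ≠ 0 := ne_of_gt hsp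
      have hx0 : x ≠ 0 := ne_of_gt hx.1
      have hτ0 : τ ≠ 0 := ne_of_gt hτ
      field_simp
      linear_combination (-2 : ℝ) * hs2
    case hq1 =>
      exact (((continuous_id.mul (by continuity)).continuousOn).div hqcont hqden)
    case hgq1 =>
      intro x hx
      rcases eq_or_lt_of_le hx.2 with heq | hlt
      · subst heq
        simp [hVxp, Real.zero_rpow (by norm_num : (-(1/2):ℝ) ≠ 0)]
      · have hx' : x ∈ Set.Ioo 0 xp := ⟨hx.1, hlt⟩
        simp only [hsA x hx', hsB x hx', hrpow x hx']
        rw [inv_mul_eq_div, div_div,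
          show x * (τ * (Real.sqrt (xp - x) * Real.sqrt (xp + x)))
            = x * (τ * Real.sqrt (xp + x) * Real.sqrt (xp - x)) by ring,
          show x^2*(1 - τ*x^2) = x * (x*(1 - τ*x^2)) by ring,
          mul_div_mul_left _ _ (ne_of_gt hx.1)]
  · -- second integral
    have := aux_ftc (2*τ - b^2*η^2) τ xp hτ hc hτxp
      (fun x => b^2*η*x^2 / Real.sqrt (1 - V x))
      (fun x => -(b^2*η) * Real.sqrt (2*τ - b^2*η^2 - τ^2*x^2) / τ^2)
      (by fun_prop)
      ?hd2
      (fun x => b^2*η*x / (τ * Real.sqrt (xp + x)))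
      ?hq2
      ?hgq2
    · rw [this]
      have hz : 2*τ - b^2*η^2 - τ^2*xp^2 = 0 := by linear_combination (-1 : ℝ) * hxp2
      simp only [hz, Real.sqrt_zero, mul_zero, zero_mul, zero_div, zero_sub]
      field_simp
      simp
    case hd2 =>
      intro x hx
      have hux := hu x hx
      have hsp : 0 < Real.sqrt (2*τ - b^2*η^2 - τ^2*x^2) := Real.sqrt_pos.2 hux
      have hdu : HasDerivAt (fun y : ℝ => 2*τ - b^2*η^2 - τ^2*y^2) (-(τ^2*(2*x))) x := by
        simpa using ((hasDerivAt_pow 2 x).const_mul (τ^2)).const_sub (2*τ - b^2*η^2)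
      have hdsq := hdu.sqrt (ne_of_gt hux)
      have hD := (hdsq.const_mul (-(b^2*η))).div_const (τ^2)
      refine hD.congr_deriv ?_
      symm
      simp only [hsA x hx]
      set s := Real.sqrt (2*τ - b^2*η^2 - τ^2*x^2) with hs_def
      have hs0 : s ≠ 0 := ne_of_gt hsp
      have hx0 : x ≠ 0 := ne_of_gt hx.1
      have hτ0 : τ ≠ 0 := ne_of_gt hτ
      field_simp
    case hq2 =>
      exact ((continuous_const.mul continuous_id).continuousOn).div hqcont hqden
    case hgq2 =>
      intro x hx
      rcases eq_or_lt_of_le hx.2 with heq | hlt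
      · subst heq
        simp [hVxp, Real.zero_rpow (by norm_num : (-(1/2):ℝ) ≠ 0)]
      · have hx' : x ∈ Set.Ioo 0 xp := ⟨hx.1, hlt⟩
        simp only [hsA x hx', hsB x hx', hrpow x hx']
        rw [inv_mul_eq_div, div_div,
          show x * (τ * (Real.sqrt (xp - x) * Real.sqrt (xp + x)))
            = x * (τ * Real.sqrt (xp + x) * Real.sqrt (xp - x)) by ring,
          show b^2*η*x^2 = x * (b^2*η*x) by ring,
          mul_div_mul_left _ _ (ne_of_gt hx.1)]
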